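/- arXiv:2102.10159 — 3 statements merged into one kernel-verified Lean document; each statement's English description precedes it below -/
import Mathlib

section
/- Suppose u₁ ∈ U^h_{c₁} and u₂ ∈ V^h_{c₂}, where U^h_c is the set of grid functions u with F^h_i[u] + c ≤ 0 at all interior grid points and H^h_i[u] < 0 at all boundary grid points, and V^h_c is defined with the reversed strict/non-strict inequalities (F^h_i[u] + c ≥ 0 at interior points, H^h_i[u] > 0 at boundary points). Assume F^h and H^h are monotone schemes in the sense that G^h(x, u(x) − u(·)) is non-decreasing in u(x) and in the differences u(x) − u(y), and are invariant under adding constants to u. Then c₁ ≤ c₂. -/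
/-- Comparison of eigenvalues: if `u₁` is a subsolution with constant `c₁` (strictly at the
boundary) and `u₂` a supersolution with constant `c₂` (strictly at the boundary) for
monotone schemes depending only on differences, then `c₁ ≤ c₂`. -/
theorem eigenvalue_comparison {α : Type*} [Fintype α] [Nonempty α]
    (interiorPts : Set α)
    (F H : α → (α → ℝ) → ℝ)
    (hFmono : ∀ x (d₁ d₂ : α → ℝ), (∀ y, d₁ y ≤ d₂ y) → F x d₁ ≤ F x d₂)
    (hHmono : ∀ x (d₁ d₂ : α → ℝ), (∀ y, d₁ y ≤ d₂ y) → H x d₁ ≤ H x d₂)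
    (c₁ c₂ : ℝ) (u₁ u₂ : α → ℝ)
    (h1F : ∀ x ∈ interiorPts, F x (fun y => u₁ x - u₁ y) + c₁ ≤ 0)
    (h1H : ∀ x ∉ interiorPts, H x (fun y => u₁ x - u₁ y) < 0)
    (h2F : ∀ x ∈ interiorPts, F x (fun y => u₂ x - u₂ y) + c₂ ≥ 0)
    (h2H : ∀ x ∉ interiorPts, H x (fun y => u₂ x - u₂ y) > 0) :
    c₁ ≤ c₂ := by
  obtain ⟨x, hx⟩ := Finite.exists_max (fun y => u₁ y - u₂ y)
  have hd : ∀ y, u₂ x - u₂ y ≤ u₁ x - u₁ y := fun y => by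
    have := hx y; linarith
  by_cases hxi : x ∈ interiorPts
  · have h1 := h1F x hxi
    have h2 := h2F x hxi
    have := hFmono x (fun y => u₂ x - u₂ y) (fun y => u₁ x - u₁ y) hd
    linarith
  · have h1 := h1H x hxi
    have h2 := h2H x hxi
    have := hHmono x (fun y => u₂ x - u₂ y) (fun y => u₁ x - u₁ y) hd
    linarith
end

section
/- Let u : X̄ → ℝ solve a consistent monotone discrete eigenvalue scheme with eigenvalue c^h, and suppose there exist u₋ ∈ U^h_{c_ex − ω(h)} and u₊ ∈ V^h_{c_ex + ω(h)}. Then, given the eigenvalue comparison lemma (u₁ ∈ U^h_{c₁} and u₂ ∈ V^h_{c₂} implies c₁ ≤ c₂), the computed eigenvalue satisfies |c^h − c_ex| ≤ ω(h). -/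
/-- Convergence of the computed eigenvalue: if `v` solves the discrete eigenvalue scheme
with eigenvalue `ch`, there exist a subsolution at level `cex − ω` and a supersolution at
level `cex + ω`, and the eigenvalue comparison lemma holds, then `|ch − cex| ≤ ω`. -/
theorem eigenvalue_convergence {α : Type*} [Fintype α] [Nonempty α]
    (interiorPts : Set α)
    (F H : α → (α → ℝ) → ℝ)
    (hFmono : ∀ x (d₁ d₂ : α → ℝ), (∀ y, d₁ y ≤ d₂ y) → F x d₁ ≤ F x d₂)
    (hHmono : ∀ x (d₁ d₂ : α → ℝ), (∀ y, d₁ y ≤ d₂ y) → H x d₁ ≤ H x d₂)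
    (v : α → ℝ) (ch cex ω : ℝ) (hω : 0 ≤ ω)
    (hvF : ∀ x ∈ interiorPts, F x (fun y => v x - v y) + ch = 0)
    (hvH : ∀ x ∉ interiorPts, H x (fun y => v x - v y) = 0)
    (hsub : ∃ uminus : α → ℝ,
      (∀ x ∈ interiorPts, F x (fun y => uminus x - uminus y) + (cex - ω) ≤ 0) ∧
      (∀ x ∉ interiorPts, H x (fun y => uminus x - uminus y) < 0))
    (hsup : ∃ uplus : α → ℝ,
      (∀ x ∈ interiorPts, F x (fun y => uplus x - uplus y) + (cex + ω) ≥ 0) ∧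
      (∀ x ∉ interiorPts, H x (fun y => uplus x - uplus y) > 0))
    (hcomp : ∀ (c₁ c₂ : ℝ) (u₁ u₂ : α → ℝ),
      (∀ x ∈ interiorPts, F x (fun y => u₁ x - u₁ y) + c₁ ≤ 0) →
      (∀ x ∉ interiorPts, H x (fun y => u₁ x - u₁ y) < 0) →
      (∀ x ∈ interiorPts, F x (fun y => u₂ x - u₂ y) + c₂ ≥ 0) →
      (∀ x ∉ interiorPts, H x (fun y => u₂ x - u₂ y) > 0) →
      c₁ ≤ c₂) :
    |ch - cex| ≤ ω := by
  obtain ⟨um, humF, humH⟩ := hsub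
  obtain ⟨up, hupF, hupH⟩ := hsup
  have h1 : cex - ω ≤ ch := by
    obtain ⟨x, hx⟩ := Finite.exists_max (fun x => um x - v x)
    have hle : ∀ y, v x - v y ≤ um x - um y := fun y => by
      have : um y - v y ≤ um x - v x := hx y; linarith
    by_cases hxi : x ∈ interiorPts
    · have hm := hFmono x _ _ hle
      have h2 := hvF x hxi
      have h3 := humF x hxi
      linarith
    · have hm := hHmono x _ _ hle
      have h2 := hvH x hxi
      have h3 := humH x hxi
      linarith
  have h2 : ch ≤ cex + ω := by
    obtain ⟨x, hx⟩ := Finite.exists_max (fun x => v x - up x)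
    have hle : ∀ y, up x - up y ≤ v x - v y := fun y => by
      have : v y - up y ≤ v x - up x := hx y; linarith
    by_cases hxi : x ∈ interiorPts
    · have hm := hFmono x _ _ hle
      have h2 := hvF x hxi
      have h3 := hupF x hxi
      linarith
    · have hm := hHmono x _ _ hle
      have h2 := hvH x hxi
      have h3 := hupH x hxi
      linarith
  rw [abs_sub_le_iff]
  constructor <;> linarith
end

section
/- Let t ⊂ ℝ² be a triangle with vertices x₀, x₁, x₂, where the maximal interior angle θ occurs at x₀ and satisfies |cos θ| ≤ M for some M < 1. Let u be an affine function on t with |u(xᵢ) − u(xⱼ)| ≤ R|xᵢ − xⱼ| for all vertex pairs i, j. Then the gradient p of u satisfies |p| ≤ 2R/(1 − M). -/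
set_option maxHeartbeats 1000000


open scoped RealInnerProductSpace

/-- Gradient bound for an affine function on a nondegenerate triangle whose maximal
interior angle θ (at the vertex x₀) satisfies `|cos θ| ≤ M < 1`, given discrete
Lipschitz bounds at the vertices. -/
theorem affine_gradient_bound_triangle
    (x₀ x₁ x₂ : EuclideanSpace ℝ (Fin 2))
    (hindep : LinearIndependent ℝ ![x₁ - x₀, x₂ - x₀])
    (M : ℝ) (hM : M < 1)
    (hangle : |⟪x₁ - x₀, x₂ - x₀⟫| ≤ M * (‖x₁ - x₀‖ * ‖x₂ - x₀‖))
    (hmaxangle : ∀ i j k : Fin 3, ({i, j, k} : Set (Fin 3)) = Set.univ →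
      ⟪(![x₀, x₁, x₂] j) - (![x₀, x₁, x₂] i), (![x₀, x₁, x₂] k) - (![x₀, x₁, x₂] i)⟫
        / (‖(![x₀, x₁, x₂] j) - (![x₀, x₁, x₂] i)‖ * ‖(![x₀, x₁, x₂] k) - (![x₀, x₁, x₂] i)‖)
      ≥ ⟪x₁ - x₀, x₂ - x₀⟫ / (‖x₁ - x₀‖ * ‖x₂ - x₀‖))
    (u : EuclideanSpace ℝ (Fin 2) → ℝ) (p : EuclideanSpace ℝ (Fin 2))
    (haff : ∀ x, u x = u x₀ + ⟪p, x - x₀⟫)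
    (R : ℝ)
    (hLip : ∀ i j : Fin 3, |u (![x₀, x₁, x₂] i) - u (![x₀, x₁, x₂] j)|
      ≤ R * ‖(![x₀, x₁, x₂] i) - (![x₀, x₁, x₂] j)‖) :
    ‖p‖ ≤ 2 * R / (1 - M) := by
  set v₁ := x₁ - x₀ with hv₁
  set v₂ := x₂ - x₀ with hv₂
  have hv1ne : v₁ ≠ 0 := by
    have := hindep.ne_zero 0; simpa using this
  have hv2ne : v₂ ≠ 0 := by
    have := hindep.ne_zero 1; simpa using this
  have hn1 : (0:ℝ) < ‖v₁‖ := norm_pos_iff.mpr hv1ne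
  have hn2 : (0:ℝ) < ‖v₂‖ := norm_pos_iff.mpr hv2ne
  have hcard : Fintype.card (Fin 2) = Module.finrank ℝ (EuclideanSpace ℝ (Fin 2)) := by
    simp
  let b := basisOfLinearIndependentOfCardEqFinrank hindep hcard
  have hb : ⇑b = ![v₁, v₂] := coe_basisOfLinearIndependentOfCardEqFinrank hindep hcard
  set a : ℝ := b.repr p 0 with ha
  set c : ℝ := b.repr p 1 with hc
  have hp : p = a • v₁ + c • v₂ := by
    have := b.sum_repr p
    rw [Fin.sum_univ_two, hb] at this
    simpa using this.symm
  have hM0 : 0 ≤ M := by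
    have h1 : (0:ℝ) ≤ |⟪v₁, v₂⟫| := abs_nonneg _
    nlinarith [mul_pos hn1 hn2]
  have hA : |⟪p, v₁⟫| ≤ R * ‖v₁‖ := by
    have h := hLip 1 0
    simp only [Matrix.cons_val_one, Matrix.head_cons, Matrix.cons_val_zero] at h
    rw [haff x₁, haff x₀] at h
    simpa using h
  have hB : |⟪p, v₂⟫| ≤ R * ‖v₂‖ := by
    have h := hLip 2 0
    simp only [Matrix.cons_val_two, Matrix.tail_cons, Matrix.head_cons,
      Matrix.cons_val_zero] at h
    rw [haff x₂, haff x₀] at h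
    simpa using h
  have hAe : ⟪p, v₁⟫ = a * (‖v₁‖ * ‖v₁‖) + c * ⟪v₂, v₁⟫ := by
    rw [hp, inner_add_left, real_inner_smul_left, real_inner_smul_left,
      real_inner_self_eq_norm_mul_norm]
  have hBe : ⟪p, v₂⟫ = a * ⟪v₁, v₂⟫ + c * (‖v₂‖ * ‖v₂‖) := by
    rw [hp, inner_add_left, real_inner_smul_left, real_inner_smul_left,
      real_inner_self_eq_norm_mul_norm]
  have hsym : ⟪v₂, v₁⟫ = ⟪v₁, v₂⟫ := real_inner_comm _ _
  set s := |a| * ‖v₁‖ with hs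
  set t := |c| * ‖v₂‖ with ht
  have hs0 : 0 ≤ s := mul_nonneg (abs_nonneg _) hn1.le
  have ht0 : 0 ≤ t := mul_nonneg (abs_nonneg _) hn2.le
  -- s ≤ R + M * t
  have h1 : s ≤ R + M * t := by
    have key : s * ‖v₁‖ ≤ (R + M * t) * ‖v₁‖ := by
      have e1 : s * ‖v₁‖ = |a * (‖v₁‖ * ‖v₁‖)| := by
        rw [abs_mul, abs_of_nonneg (mul_nonneg hn1.le hn1.le)]; ring
      have e2 : a * (‖v₁‖ * ‖v₁‖) = ⟪p, v₁⟫ - c * ⟪v₂, v₁⟫ := by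
        rw [hAe]; ring
      calc s * ‖v₁‖ = |⟪p, v₁⟫ - c * ⟪v₂, v₁⟫| := by rw [e1, e2]
        _ ≤ |⟪p, v₁⟫| + |c| * |⟪v₂, v₁⟫| := by
            calc |⟪p, v₁⟫ - c * ⟪v₂, v₁⟫| ≤ |⟪p, v₁⟫| + |c * ⟪v₂, v₁⟫| := abs_sub _ _
              _ = |⟪p, v₁⟫| + |c| * |⟪v₂, v₁⟫| := by rw [abs_mul]
        _ ≤ R * ‖v₁‖ + |c| * (M * (‖v₁‖ * ‖v₂‖)) := by
            have := hangle
            rw [hsym]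
            gcongr
        _ = (R + M * t) * ‖v₁‖ := by rw [ht]; ring
    exact le_of_mul_le_mul_right key hn1
  have h2 : t ≤ R + M * s := by
    have key : t * ‖v₂‖ ≤ (R + M * s) * ‖v₂‖ := by
      have e1 : t * ‖v₂‖ = |c * (‖v₂‖ * ‖v₂‖)| := by
        rw [abs_mul, abs_of_nonneg (mul_nonneg hn2.le hn2.le)]; ring
      have e2 : c * (‖v₂‖ * ‖v₂‖) = ⟪p, v₂⟫ - a * ⟪v₁, v₂⟫ := by
        rw [hBe]; ring
      calc t * ‖v₂‖ = |⟪p, v₂⟫ - a * ⟪v₁, v₂⟫| := by rw [e1, e2]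
        _ ≤ |⟪p, v₂⟫| + |a| * |⟪v₁, v₂⟫| := by
            calc |⟪p, v₂⟫ - a * ⟪v₁, v₂⟫| ≤ |⟪p, v₂⟫| + |a * ⟪v₁, v₂⟫| := abs_sub _ _
              _ = |⟪p, v₂⟫| + |a| * |⟪v₁, v₂⟫| := by rw [abs_mul]
        _ ≤ R * ‖v₂‖ + |a| * (M * (‖v₁‖ * ‖v₂‖)) := by gcongr
        _ = (R + M * s) * ‖v₂‖ := by rw [hs]; ring
    exact le_of_mul_le_mul_right key hn2
  have hnp : ‖p‖ ≤ s + t := by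
    calc ‖p‖ = ‖a • v₁ + c • v₂‖ := by rw [hp]
      _ ≤ ‖a • v₁‖ + ‖c • v₂‖ := norm_add_le _ _
      _ = s + t := by rw [norm_smul, norm_smul, Real.norm_eq_abs, Real.norm_eq_abs]
  have hst : (1 - M) * (s + t) ≤ 2 * R := by nlinarith
  rw [le_div_iff₀ (by linarith : (0:ℝ) < 1 - M)]
  nlinarith
end
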